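/- Suppose the ℓ-th submodule M_ℓ contains a generating set of cont(L) as a left ideal, i.e., cont(L) = R[x][∂]·M_ℓ. Let G be a reduced Gröbner basis of the ℓ-th coefficient ideal I_ℓ ⊆ R[x], let f ∈ G have lowest x-degree, and let F ∈ cont(L) with deg_∂(F) = ℓ and lc_∂(F) = f. Then F is a completely desingularized operator for L: F is desingularized and the content of f in R divides the content of the leading coefficient of every desingularized operator for L. -/

import Mathlib

open Polynomial

noncomputable section

/-- `Q_R(x)`, the field of rational functions over the fraction field `Q_R` of `R`,
realized as the fraction field of `R[x]`. -/
abbrev QX (R : Type) [CommRing R] [IsDomain R] := FractionRing (Polynomial R)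

/-- Data of an Ore algebra `R[x][∂; σ, δ] ⊆ Q_R(x)[∂; σ, δ]`.
The ring `A` plays the role of `Q_R(x)[∂]`; `ι` embeds the coefficient field,
`D` is the Ore variable `∂`, subject to the commutation rule `∂·p = σ(p)·∂ + δ(p)`,
and every element of `A` has a unique finite coefficient expansion `Σ ι(cᵢ)·∂^i`. -/
structure OreAlg (R : Type) [CommRing R] [IsDomain R] (A : Type) [Ring A] where
  σ : Polynomial R ≃+* Polynomial R
  σ_fix : ∀ r : R, σ (C r) = C r
  δ : Polynomial R → Polynomial R
  δ_add : ∀ f g, δ (f + g) = δ f + δ g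
  δ_linear : ∀ (r : R) (f), δ (C r * f) = C r * δ f
  ι : QX R →+* A
  ι_inj : Function.Injective ι
  D : A
  comm_rule : ∀ p : Polynomial R,
    D * ι (algebraMap (Polynomial R) (QX R) p)
      = ι (algebraMap (Polynomial R) (QX R) (σ p)) * D
        + ι (algebraMap (Polynomial R) (QX R) (δ p))
  δ_leibniz : ∀ f g, δ (f * g) = σ f * δ g + δ f * g
  coeff : A → ℕ → QX R
  coeff_inj : ∀ P Q : A, (∀ i, coeff P i = coeff Q i) → P = Q
  coeff_add : ∀ P Q i, coeff (P + Q) i = coeff P i + coeff Q i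
  coeff_smul : ∀ (f : QX R) (P : A) (i), coeff (ι f * P) i = f * coeff P i
  coeff_bdd : ∀ P : A, ∃ N, ∀ i, N < i → coeff P i = 0
  coeff_mk : ∀ (N : ℕ) (c : ℕ → QX R), (∀ i, N < i → c i = 0) →
    ∀ j, coeff (∑ i ∈ Finset.range (N + 1), ι (c i) * D ^ i) j = c j

namespace OreAlg

variable {R : Type} [CommRing R] [IsDomain R] {A : Type} [Ring A] (O : OreAlg R A)

/-- The embedding of `R[x]` into the Ore algebra. -/
def ιp (f : Polynomial R) : A := O.ι (algebraMap (Polynomial R) (QX R) f)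

/-- The `i`-th `∂`-coefficient of `P` lies in `R[x]`. -/
def PolyCoeff (P : A) (i : ℕ) : Prop :=
  ∃ f : Polynomial R, O.coeff P i = algebraMap (Polynomial R) (QX R) f

/-- `P` belongs to the subring `R[x][∂]` of `Q_R(x)[∂]`. -/
def InB (P : A) : Prop := ∀ i, O.PolyCoeff P i

/-- The order (degree in `∂`) of an operator. -/
def ord (P : A) : ℕ := sSup {i | O.coeff P i ≠ 0}

/-- The leading coefficient (with respect to `∂`), in `Q_R(x)`. -/
def lc (P : A) : QX R := O.coeff P (O.ord P)

/-- The contraction ideal `cont(L) = Q_R(x)[∂]·L ∩ R[x][∂]`. -/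
def cont (L : A) : Set A := {P | O.InB P ∧ ∃ Q : A, P = Q * L}

/-- The `k`-th submodule `M_k(L) = {P ∈ cont(L) : deg_∂ P ≤ k}`. -/
def M (L : A) (k : ℕ) : Set A := {P | P ∈ O.cont L ∧ O.ord P ≤ k}

/-- The `k`-th coefficient ideal `I_k = {[∂^k]P : P ∈ M_k} ∪ {0}` (as a set of
polynomials; `0` arises from `P = 0`). -/
def Icoeff (L : A) (k : ℕ) : Set (Polynomial R) :=
  {f | ∃ P ∈ O.M L k, O.coeff P k = algebraMap (Polynomial R) (QX R) f}

end OreAlg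

/-- `gcd(p, w) = 1` in `R[x]`: every common divisor is a unit. -/
def Copr {R : Type} [CommRing R] (p w : Polynomial R) : Prop :=
  ∀ d : Polynomial R, d ∣ p → d ∣ w → IsUnit d

namespace OreAlg

variable {R : Type} [CommRing R] [IsDomain R] {A : Type} [Ring A] (O : OreAlg R A)

/-- `P` is a `p`-removing operator for `L` over `R[x]`, of order `k`:
`P·L ∈ R[x][∂]` and `σ^{-k}(lc_∂(P·L)) = (w/(v·p))·lc_∂(L)` with `gcd(p, w) = 1`. -/
def IsRemoving (L : A) (p : Polynomial R) (k : ℕ) (P : A) : Prop :=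
  O.ord P = k ∧ O.InB (P * L) ∧
  ∃ w v t l : Polynomial R, v ≠ 0 ∧ Copr p w ∧
    O.lc (P * L) = algebraMap (Polynomial R) (QX R) t ∧
    O.lc L = algebraMap (Polynomial R) (QX R) l ∧
    (⇑O.σ.symm)^[k] t * (v * p) = w * l

/-- `p` is removable from `L` (at some order). -/
def Removable (L : A) (p : Polynomial R) : Prop :=
  ∃ k P, O.IsRemoving L p k P

/-- Factorization data for `lc_∂(L) = c·p₁^{e₁}⋯p_m^{e_m}`, with `c ∈ R` and the
`pᵢ ∈ R[x] \ R` irreducible and pairwise coprime; `L` has order `r > 0`. -/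
def Factored (L : A) (r m : ℕ) (c : R) (p : Fin m → Polynomial R)
    (e : Fin m → ℕ) : Prop :=
  O.ord L = r ∧ 0 < r ∧ c ≠ 0 ∧
  O.lc L = algebraMap (Polynomial R) (QX R) (C c * ∏ i, p i ^ e i) ∧
  (∀ i, Irreducible (p i) ∧ 0 < (p i).natDegree) ∧
  (∀ i j, i ≠ j → Copr (p i) (p j))

/-- `T` is a desingularized operator for `L`: `T ∈ cont(L)` and
`σ^{r-k}(lc_∂(T)) = (a/(b·∏ pᵢ^{kᵢ}))·lc_∂(L)` with `a, b ∈ R`, where each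
`pᵢ^{dᵢ}` with `dᵢ > kᵢ` is non-removable from `L`. -/
def Desing (L : A) (r m : ℕ) (c : R) (p : Fin m → Polynomial R)
    (e : Fin m → ℕ) (T : A) : Prop :=
  T ∈ O.cont L ∧ r ≤ O.ord T ∧
  ∃ (a b : R) (k : Fin m → ℕ) (t l : Polynomial R),
    b ≠ 0 ∧ (∀ i, k i ≤ e i) ∧
    O.lc T = algebraMap (Polynomial R) (QX R) t ∧
    O.lc L = algebraMap (Polynomial R) (QX R) l ∧
    (⇑O.σ.symm)^[O.ord T - r] t * (C b * ∏ i, p i ^ k i) = C a * l ∧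
    (∀ i (d : ℕ), k i < d → ¬ O.Removable L (p i ^ d))

/-- The left ideal of `R[x][∂]` generated by a set `S ⊆ R[x][∂]`. -/
def LIdeal (S : Set A) : Set A :=
  {P | ∃ (n : ℕ) (co s : Fin n → A), (∀ i, O.InB (co i)) ∧ (∀ i, s i ∈ S) ∧
    P = ∑ i, co i * s i}

/-- The constant `a ∈ R` viewed inside the Ore algebra. -/
def cst (a : R) : A := O.ιp (C a)

/-- The saturation `I : a^∞ = {P ∈ R[x][∂] : aⁱ·P ∈ I for some i}`. -/
def sat (I : Set A) (a : R) : Set A :=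
  {P | O.InB P ∧ ∃ i : ℕ, O.cst a ^ i * P ∈ I}

end OreAlg

/-! ### Auxiliary infrastructure for the main theorem -/

namespace OreAlg

variable {R : Type} [CommRing R] [IsDomain R] {A : Type} [Ring A] (O : OreAlg R A)

local notation "φ" => algebraMap (Polynomial R) (QX R)

lemma phi_inj : Function.Injective (φ) :=
  IsFractionRing.injective (Polynomial R) (QX R)

lemma coeff_zero (i : ℕ) : O.coeff (0 : A) i = 0 := by
  have h := O.coeff_add 0 0 i
  rw [add_zero] at h
  exact (left_eq_add.mp h)

lemma eq_zero_of_coeff (P : A) (h : ∀ i, O.coeff P i = 0) : P = 0 :=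
  O.coeff_inj P 0 (fun i => by rw [h, O.coeff_zero])

lemma coeff_neg (P : A) (i : ℕ) : O.coeff (-P) i = - O.coeff P i := by
  have h := O.coeff_add P (-P) i
  rw [add_neg_cancel, O.coeff_zero] at h
  linear_combination -h

lemma coeff_sub (P Q : A) (i : ℕ) : O.coeff (P - Q) i = O.coeff P i - O.coeff Q i := by
  rw [sub_eq_add_neg, O.coeff_add, O.coeff_neg, sub_eq_add_neg]

lemma coeff_sum {ι : Type*} (s : Finset ι) (F : ι → A) (j : ℕ) :
    O.coeff (∑ i ∈ s, F i) j = ∑ i ∈ s, O.coeff (F i) j := by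
  classical
  induction s using Finset.induction_on with
  | empty => simp [O.coeff_zero]
  | @insert a s ha ih => rw [Finset.sum_insert ha, Finset.sum_insert ha, O.coeff_add, ih]

lemma bddAbove_coeffset (P : A) : BddAbove {i | O.coeff P i ≠ 0} := by
  obtain ⟨N, hN⟩ := O.coeff_bdd P
  exact ⟨N, fun i hi => le_of_not_gt (fun h => hi (hN i h))⟩

lemma le_ord {P : A} {i : ℕ} (h : O.coeff P i ≠ 0) : i ≤ O.ord P :=
  le_csSup (O.bddAbove_coeffset P) h

lemma coeff_ord_ne {P : A} (hP : P ≠ 0) : O.coeff P (O.ord P) ≠ 0 := by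
  have hne : {i | O.coeff P i ≠ 0}.Nonempty := by
    by_contra h
    exact hP (O.eq_zero_of_coeff P (fun i => by
      by_contra hi; exact h ⟨i, hi⟩))
  exact Nat.sSup_mem hne (O.bddAbove_coeffset P)

lemma coeff_of_ord_lt {P : A} {i : ℕ} (h : O.ord P < i) : O.coeff P i = 0 := by
  by_contra h'
  exact absurd (O.le_ord h') (not_le.mpr h)

lemma ord_le {P : A} {N : ℕ} (h : ∀ i, N < i → O.coeff P i = 0) : O.ord P ≤ N :=
  csSup_le' (fun i hi => le_of_not_gt (fun hlt => hi (h i hlt)))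

lemma ord_zero : O.ord (0 : A) = 0 :=
  Nat.le_zero.mp (O.ord_le (fun i _ => O.coeff_zero i))

/-- A canonical choice of polynomial coefficient. -/
noncomputable def pcf (P : A) (i : ℕ) : Polynomial R :=
  Function.invFun (φ) (O.coeff P i)

lemma pcf_spec {P : A} {i : ℕ} (h : O.PolyCoeff P i) : O.coeff P i = φ (O.pcf P i) := by
  obtain ⟨t, ht⟩ := h
  exact (Function.invFun_eq ⟨t, ht.symm⟩).symm

lemma pcf_eq {P : A} {i : ℕ} {t : Polynomial R} (h : O.coeff P i = φ t) : O.pcf P i = t :=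
  phi_inj (R := R) (((O.pcf_spec ⟨t, h⟩).symm).trans h)

lemma pcf_zero {P : A} {i : ℕ} (h : O.coeff P i = 0) : O.pcf P i = 0 :=
  O.pcf_eq (by rw [h, map_zero])

lemma delta_zero : O.δ 0 = 0 := by
  have h := O.δ_add 0 0
  rw [add_zero] at h
  exact (left_eq_add.mp h)

lemma eq_sum (P : A) (N : ℕ) (hN : ∀ i, N < i → O.coeff P i = 0) :
    P = ∑ i ∈ Finset.range (N + 1), O.ι (O.coeff P i) * O.D ^ i :=
  O.coeff_inj _ _ (fun j => (O.coeff_mk N (fun i => O.coeff P i) hN j).symm)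

lemma InB_zero : O.InB (0 : A) := fun i => ⟨0, by rw [O.coeff_zero, map_zero]⟩

lemma InB_add {P Q : A} (hP : O.InB P) (hQ : O.InB Q) : O.InB (P + Q) := fun i => by
  obtain ⟨a, ha⟩ := hP i; obtain ⟨b, hb⟩ := hQ i
  exact ⟨a + b, by rw [O.coeff_add, ha, hb, map_add]⟩

lemma InB_sum {ι : Type*} (s : Finset ι) (F : ι → A) (h : ∀ i ∈ s, O.InB (F i)) :
    O.InB (∑ i ∈ s, F i) := by
  classical
  induction s using Finset.induction_on with
  | empty => simpa using O.InB_zero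
  | @insert a s ha ih =>
    rw [Finset.sum_insert ha]
    exact O.InB_add (h a (Finset.mem_insert_self a s))
      (ih (fun i hi => h i (Finset.mem_insert_of_mem hi)))

lemma InB_smul (q : Polynomial R) {P : A} (hP : O.InB P) : O.InB (O.ιp q * P) := fun i => by
  obtain ⟨a, ha⟩ := hP i
  exact ⟨q * a, by rw [ιp, O.coeff_smul, ha, map_mul]⟩

end OreAlg

namespace OreAlg

variable {R : Type} [CommRing R] [IsDomain R] {A : Type} [Ring A] (O : OreAlg R A)

local notation "φ" => algebraMap (Polynomial R) (QX R)

lemma coeff_D_mul {P : A} (hP : O.InB P) (j : ℕ) :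
    O.coeff (O.D * P) j
      = φ ((if j = 0 then 0 else O.σ (O.pcf P (j - 1))) + O.δ (O.pcf P j)) := by
  obtain ⟨N, hN⟩ := O.coeff_bdd P
  set c : ℕ → Polynomial R := O.pcf P with hc
  have hcs : ∀ i, O.coeff P i = φ (c i) := fun i => O.pcf_spec (hP i)
  have hc0 : ∀ i, N < i → c i = 0 := fun i hi => O.pcf_zero (hN i hi)
  have hrep : P = ∑ i ∈ Finset.range (N + 1), O.ι (φ (c i)) * O.D ^ i := by
    rw [O.eq_sum P N hN]
    exact Finset.sum_congr rfl (fun i _ => by rw [hcs i])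
  set cc : ℕ → Polynomial R :=
    fun j => (if j = 0 then 0 else O.σ (c (j - 1))) + O.δ (c j) with hcc
  have hccvan : ∀ j, N + 1 < j → φ (cc j) = 0 := by
    intro j hj
    have h1 : c (j - 1) = 0 := hc0 _ (by omega)
    have h2 : c j = 0 := hc0 _ (by omega)
    have : cc j = 0 := by
      rw [hcc]; simp only [h1, h2, map_zero, O.delta_zero, if_neg (by omega : ¬ j = 0), add_zero]
    rw [this, map_zero]
  have hDP : O.D * P = ∑ j ∈ Finset.range (N + 2), O.ι (φ (cc j)) * O.D ^ j := by
    conv_lhs => rw [hrep]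
    rw [Finset.mul_sum]
    have hterm : ∀ i,
        O.D * (O.ι (φ (c i)) * O.D ^ i)
          = O.ι (φ (O.σ (c i))) * O.D ^ (i + 1) + O.ι (φ (O.δ (c i))) * O.D ^ i := by
      intro i
      rw [← mul_assoc, O.comm_rule (c i), add_mul, mul_assoc, ← pow_succ']
    calc ∑ i ∈ Finset.range (N + 1), O.D * (O.ι (φ (c i)) * O.D ^ i)
        = ∑ i ∈ Finset.range (N + 1),
            (O.ι (φ (O.σ (c i))) * O.D ^ (i + 1) + O.ι (φ (O.δ (c i))) * O.D ^ i) :=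
          Finset.sum_congr rfl (fun i _ => hterm i)
      _ = (∑ i ∈ Finset.range (N + 1), O.ι (φ (O.σ (c i))) * O.D ^ (i + 1))
            + ∑ i ∈ Finset.range (N + 1), O.ι (φ (O.δ (c i))) * O.D ^ i :=
          Finset.sum_add_distrib
      _ = (∑ j ∈ Finset.range (N + 2),
              O.ι (φ (if j = 0 then 0 else O.σ (c (j - 1)))) * O.D ^ j)
            + ∑ j ∈ Finset.range (N + 2), O.ι (φ (O.δ (c j))) * O.D ^ j := by
          congr 1
          · rw [Finset.sum_range_succ' (fun j => O.ι (φ (if j = 0 then 0 else O.σ (c (j - 1)))) * O.D ^ j) (N + 1)]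
            simp
          · rw [Finset.sum_range_succ (fun j => O.ι (φ (O.δ (c j))) * O.D ^ j) (N + 1)]
            rw [hc0 (N + 1) (by omega), O.delta_zero, map_zero, map_zero, zero_mul, add_zero]
      _ = ∑ j ∈ Finset.range (N + 2), O.ι (φ (cc j)) * O.D ^ j := by
          rw [← Finset.sum_add_distrib]
          exact Finset.sum_congr rfl (fun j _ => by rw [hcc, map_add, map_add, add_mul])
  have := O.coeff_mk (N + 1) (fun j => φ (cc j)) (fun j hj => hccvan j hj) j
  rw [hDP]
  exact this

lemma InB_D_mul {P : A} (hP : O.InB P) : O.InB (O.D * P) :=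
  fun j => ⟨_, O.coeff_D_mul hP j⟩

lemma coeff_D_mul_van {P : A} (hP : O.InB P) {N : ℕ} (hN : ∀ i, N < i → O.coeff P i = 0)
    {j : ℕ} (hj : N + 1 < j) : O.coeff (O.D * P) j = 0 := by
  rw [O.coeff_D_mul hP j]
  have h1 : O.pcf P (j - 1) = 0 := O.pcf_zero (hN _ (by omega))
  have h2 : O.pcf P j = 0 := O.pcf_zero (hN _ (by omega))
  rw [h1, h2, map_zero, O.delta_zero, if_neg (by omega : ¬ j = 0), add_zero, map_zero]

lemma coeff_D_mul_top {P : A} (hP : O.InB P) {N : ℕ} (hN : ∀ i, N < i → O.coeff P i = 0) :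
    O.coeff (O.D * P) (N + 1) = φ (O.σ (O.pcf P N)) := by
  rw [O.coeff_D_mul hP (N + 1)]
  have h2 : O.pcf P (N + 1) = 0 := O.pcf_zero (hN _ (by omega))
  rw [h2, O.delta_zero, if_neg (Nat.succ_ne_zero _), Nat.add_sub_cancel, add_zero]

lemma InB_Dpow_mul (n : ℕ) {P : A} (hP : O.InB P) : O.InB (O.D ^ n * P) := by
  induction n with
  | zero => simpa using hP
  | succ n ih =>
    rw [pow_succ', mul_assoc]
    exact O.InB_D_mul ih

lemma Dpow_facts (m : ℕ) {Y : A} (hY : O.InB Y) {N : ℕ} (hN : ∀ i, N < i → O.coeff Y i = 0) :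
    (∀ i, N + m < i → O.coeff (O.D ^ m * Y) i = 0)
      ∧ O.coeff (O.D ^ m * Y) (N + m) = φ ((⇑O.σ)^[m] (O.pcf Y N)) := by
  induction m with
  | zero =>
    constructor
    · intro i hi; rw [pow_zero, one_mul]; exact hN i (by omega)
    · rw [pow_zero, one_mul, Function.iterate_zero_apply]
      exact O.pcf_spec (hY N)
  | succ m ih =>
    have hB : O.InB (O.D ^ m * Y) := O.InB_Dpow_mul m hY
    have hvan : ∀ i, N + m < i → O.coeff (O.D ^ m * Y) i = 0 := ih.1
    constructor
    · intro i hi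
      rw [pow_succ', mul_assoc]
      exact O.coeff_D_mul_van hB hvan (by omega)
    · rw [pow_succ', mul_assoc]
      have := O.coeff_D_mul_top hB hvan
      rw [show N + (m + 1) = (N + m) + 1 by omega, this,
        O.pcf_eq ih.2, Function.iterate_succ_apply']

lemma InB_monomial (q : Polynomial R) (n : ℕ) : O.InB (O.ιp q * O.D ^ n) := by
  have hsum : (∑ i ∈ Finset.range (n + 1),
      O.ι (if i = n then φ q else 0) * O.D ^ i) = O.ιp q * O.D ^ n := by
    rw [Finset.sum_eq_single_of_mem n (Finset.self_mem_range_succ n)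
      (fun b _ hb => by rw [if_neg hb, map_zero, zero_mul])]
    rw [if_pos rfl]; rfl
  intro j
  have := O.coeff_mk n (fun i => if i = n then φ q else 0)
    (fun i hi => if_neg (by omega)) j
  rw [hsum] at this
  refine ⟨if j = n then q else 0, ?_⟩
  rw [this]
  split <;> simp

lemma coeff_mul_expand (P Y : A) (N : ℕ) (hN : ∀ i, N < i → O.coeff P i = 0) (n : ℕ) :
    O.coeff (P * Y) n
      = ∑ i ∈ Finset.range (N + 1), O.coeff P i * O.coeff (O.D ^ i * Y) n := by
  conv_lhs => rw [O.eq_sum P N hN]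
  rw [Finset.sum_mul]
  have : ∀ i, O.ι (O.coeff P i) * O.D ^ i * Y = O.ι (O.coeff P i) * (O.D ^ i * Y) :=
    fun i => mul_assoc _ _ _
  rw [Finset.sum_congr rfl (fun i _ => by rw [this i])]
  rw [O.coeff_sum]
  exact Finset.sum_congr rfl (fun i _ => O.coeff_smul _ _ _)

lemma InB_mul {P Y : A} (hP : O.InB P) (hY : O.InB Y) : O.InB (P * Y) := by
  intro n
  obtain ⟨N, hN⟩ := O.coeff_bdd P
  refine ⟨∑ i ∈ Finset.range (N + 1), O.pcf P i * O.pcf (O.D ^ i * Y) n, ?_⟩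
  rw [O.coeff_mul_expand P Y N hN n, map_sum]
  exact Finset.sum_congr rfl (fun i _ => by
    rw [map_mul, ← O.pcf_spec (hP i), ← O.pcf_spec (O.InB_Dpow_mul i hY n)])

lemma coeff_mul_top {P Y : A} (hP0 : P ≠ 0) (hY : O.InB Y) {N : ℕ}
    (hN : ∀ i, N < i → O.coeff Y i = 0) :
    O.coeff (P * Y) (O.ord P + N)
        = O.coeff P (O.ord P) * φ ((⇑O.σ)^[O.ord P] (O.pcf Y N))
      ∧ ∀ n, O.ord P + N < n → O.coeff (P * Y) n = 0 := by
  have hPvan : ∀ i, O.ord P < i → O.coeff P i = 0 := fun i hi => O.coeff_of_ord_lt hi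
  constructor
  · rw [O.coeff_mul_expand P Y (O.ord P) hPvan]
    rw [Finset.sum_eq_single_of_mem (O.ord P) (Finset.self_mem_range_succ _)
      (fun b hb hbne => ?_)]
    · rw [add_comm (O.ord P) N, (O.Dpow_facts (O.ord P) hY hN).2]
    · have hblt : b < O.ord P := by
        have := Finset.mem_range.mp hb; omega
      rw [(O.Dpow_facts b hY hN).1 (O.ord P + N) (by omega), mul_zero]
  · intro n hn
    rw [O.coeff_mul_expand P Y (O.ord P) hPvan]
    refine Finset.sum_eq_zero (fun i hi => ?_)
    have : i ≤ O.ord P := by have := Finset.mem_range.mp hi; omega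
    rw [(O.Dpow_facts i hY hN).1 n (by omega), mul_zero]

end OreAlg

namespace OreAlg

variable {R : Type} [CommRing R] [IsDomain R] {A : Type} [Ring A] (O : OreAlg R A)

local notation "φ" => algebraMap (Polynomial R) (QX R)

lemma cont_zero (L : A) : (0 : A) ∈ O.cont L :=
  ⟨O.InB_zero, 0, (zero_mul L).symm⟩

lemma cont_add {L P Q : A} (hP : P ∈ O.cont L) (hQ : Q ∈ O.cont L) : P + Q ∈ O.cont L := by
  obtain ⟨hPB, P1, hP1⟩ := hP
  obtain ⟨hQB, Q1, hQ1⟩ := hQ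
  exact ⟨O.InB_add hPB hQB, P1 + Q1, by rw [hP1, hQ1, add_mul]⟩

lemma cont_smulB {L P b : A} (hb : O.InB b) (hP : P ∈ O.cont L) : b * P ∈ O.cont L := by
  obtain ⟨hPB, P1, hP1⟩ := hP
  exact ⟨O.InB_mul hb hPB, b * P1, by rw [hP1, mul_assoc]⟩

lemma cont_Dpow {L P : A} (n : ℕ) (hP : P ∈ O.cont L) : O.D ^ n * P ∈ O.cont L := by
  obtain ⟨hPB, P1, hP1⟩ := hP
  exact ⟨O.InB_Dpow_mul n hPB, O.D ^ n * P1, by rw [hP1, mul_assoc]⟩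

lemma cont_sum {L : A} {ι : Type*} (s : Finset ι) (F : ι → A)
    (h : ∀ i ∈ s, F i ∈ O.cont L) : (∑ i ∈ s, F i) ∈ O.cont L := by
  classical
  induction s using Finset.induction_on with
  | empty => simpa using O.cont_zero L
  | @insert a s ha ih =>
    rw [Finset.sum_insert ha]
    exact O.cont_add (h a (Finset.mem_insert_self a s))
      (ih (fun i hi => h i (Finset.mem_insert_of_mem hi)))

lemma I_zero (L : A) (l : ℕ) : (0 : Polynomial R) ∈ O.Icoeff L l := by
  refine ⟨0, ⟨O.cont_zero L, ?_⟩, by rw [O.coeff_zero, map_zero]⟩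
  rw [O.ord_zero]; exact Nat.zero_le l

lemma I_add {L : A} {l : ℕ} {s t : Polynomial R}
    (hs : s ∈ O.Icoeff L l) (ht : t ∈ O.Icoeff L l) : s + t ∈ O.Icoeff L l := by
  obtain ⟨P, ⟨hPc, hPo⟩, hPl⟩ := hs
  obtain ⟨Q, ⟨hQc, hQo⟩, hQl⟩ := ht
  refine ⟨P + Q, ⟨O.cont_add hPc hQc, O.ord_le (fun i hi => ?_)⟩, ?_⟩
  · rw [O.coeff_add, O.coeff_of_ord_lt (lt_of_le_of_lt hPo hi),
      O.coeff_of_ord_lt (lt_of_le_of_lt hQo hi), add_zero]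
  · rw [O.coeff_add, hPl, hQl, map_add]

lemma I_polymul {L : A} {l : ℕ} (q : Polynomial R) {s : Polynomial R}
    (hs : s ∈ O.Icoeff L l) : q * s ∈ O.Icoeff L l := by
  obtain ⟨P, ⟨hPc, hPo⟩, hPl⟩ := hs
  have hq : O.ιp q * P = O.ι (φ q) * P := rfl
  have hiq : O.InB (O.ιp q) := by
    have := O.InB_monomial q 0; rwa [pow_zero, mul_one] at this
  refine ⟨O.ιp q * P, ⟨O.cont_smulB hiq hPc, O.ord_le (fun i hi => ?_)⟩, ?_⟩
  · rw [hq, O.coeff_smul, O.coeff_of_ord_lt (lt_of_le_of_lt hPo hi), mul_zero]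
  · rw [hq, O.coeff_smul, hPl, map_mul]

lemma decompD : ∀ (N : ℕ) (c : ℕ → Polynomial R), ∃ (b : A) (e0 : Polynomial R),
    O.InB b ∧ ∑ i ∈ Finset.range (N + 1), O.ιp (c i) * O.D ^ i = O.D * b + O.ιp e0 := by
  intro N
  induction N with
  | zero =>
    intro c
    refine ⟨0, c 0, O.InB_zero, ?_⟩
    rw [Finset.sum_range_one, pow_zero, mul_one, mul_zero, zero_add]
  | succ N ih =>
    intro c
    set c' := c (N + 1) with hc'
    have key : O.ιp c' * O.D ^ (N + 1)
        = O.D * (O.ιp (O.σ.symm c') * O.D ^ N) - O.ιp (O.δ (O.σ.symm c')) * O.D ^ N := by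
      have hc := O.comm_rule (O.σ.symm c')
      rw [O.σ.apply_symm_apply] at hc
      have h5 : O.D * O.ιp (O.σ.symm c') = O.ιp c' * O.D + O.ιp (O.δ (O.σ.symm c')) := hc
      rw [eq_sub_iff_add_eq, pow_succ', ← mul_assoc, ← mul_assoc, ← add_mul, ← h5, mul_assoc]
    set c'' : ℕ → Polynomial R := fun i => if i = N then c N - O.δ (O.σ.symm c') else c i
      with hc''
    obtain ⟨b, e0, hbB, hsum⟩ := ih c''
    have hmod : ∑ i ∈ Finset.range (N + 1), O.ιp (c'' i) * O.D ^ i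
        = (∑ i ∈ Finset.range (N + 1), O.ιp (c i) * O.D ^ i)
            - O.ιp (O.δ (O.σ.symm c')) * O.D ^ N := by
      rw [Finset.sum_range_succ, Finset.sum_range_succ]
      have h1 : ∀ i ∈ Finset.range N, O.ιp (c'' i) * O.D ^ i = O.ιp (c i) * O.D ^ i := by
        intro i hi
        have hiN : i < N := Finset.mem_range.mp hi
        have hcc : c'' i = c i := if_neg (by omega)
        rw [hcc]
      rw [Finset.sum_congr rfl h1]
      have h2 : c'' N = c N - O.δ (O.σ.symm c') := if_pos rfl
      rw [h2]
      have h3 : O.ιp (c N - O.δ (O.σ.symm c')) = O.ιp (c N) - O.ιp (O.δ (O.σ.symm c')) := by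
        unfold ιp; rw [map_sub, map_sub]
      rw [h3, sub_mul]
      abel
    refine ⟨O.ιp (O.σ.symm c') * O.D ^ N + b, e0,
      O.InB_add (O.InB_monomial _ _) hbB, ?_⟩
    rw [Finset.sum_range_succ, ← hc', key, mul_add]
    have : ∑ i ∈ Finset.range (N + 1), O.ιp (c i) * O.D ^ i
        = ∑ i ∈ Finset.range (N + 1), O.ιp (c'' i) * O.D ^ i
            + O.ιp (O.δ (O.σ.symm c')) * O.D ^ N := by
      rw [hmod, sub_add_cancel]
    rw [this, hsum]
    abel

lemma decomp_of_InB {co : A} (h : O.InB co) :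
    ∃ (b : A) (e0 : Polynomial R), O.InB b ∧ co = O.D * b + O.ιp e0 := by
  obtain ⟨N, hN⟩ := O.coeff_bdd co
  have hrep : co = ∑ i ∈ Finset.range (N + 1), O.ιp (O.pcf co i) * O.D ^ i := by
    conv_lhs => rw [O.eq_sum co N hN]
    exact Finset.sum_congr rfl (fun i _ => by rw [O.pcf_spec (h i)]; rfl)
  obtain ⟨b, e0, hbB, hsum⟩ := O.decompD N (O.pcf co)
  exact ⟨b, e0, hbB, by rw [hrep, hsum]⟩

lemma desc {L : A} {l : ℕ} (hcont : O.cont L = O.LIdeal (O.M L l)) :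
    ∀ (n : ℕ) (P : A), P ∈ O.cont L → (∀ i, l + n < i → O.coeff P i = 0) →
      ∀ (t : Polynomial R), O.coeff P (l + n) = φ t →
      (⇑O.σ.symm)^[n] t ∈ O.Icoeff L l := by
  intro n
  induction n with
  | zero =>
    intro P hP hord t ht
    exact ⟨P, ⟨hP, O.ord_le (fun i hi => hord i (by omega))⟩, by
      rw [show l + 0 = l from rfl] at ht; exact ht⟩
  | succ n ih =>
    intro P hP hord t ht
    have hP' : P ∈ O.LIdeal (O.M L l) := hcont ▸ hP
    obtain ⟨NN, co, s, hcoB, hsM, hPsum⟩ := hP'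
    choose b e0 hbB hdecomp using fun i => O.decomp_of_InB (hcoB i)
    set Q := ∑ i, b i * s i with hQ
    set P2 := ∑ i, O.ιp (e0 i) * s i with hP2
    have hPQ : P = O.D * Q + P2 := by
      rw [hPsum, hQ, hP2, Finset.mul_sum, ← Finset.sum_add_distrib]
      refine Finset.sum_congr rfl (fun i _ => ?_)
      rw [hdecomp i, add_mul, mul_assoc]
    have hQcont : Q ∈ O.cont L :=
      O.cont_sum _ _ (fun i _ => O.cont_smulB (hbB i) (hsM i).1)
    have hQB : O.InB Q := hQcont.1
    have hP2van : ∀ j, l < j → O.coeff P2 j = 0 := by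
      intro j hj
      rw [hP2, O.coeff_sum]
      refine Finset.sum_eq_zero (fun i _ => ?_)
      have : O.ιp (e0 i) * s i = O.ι (φ (e0 i)) * s i := rfl
      rw [this, O.coeff_smul, O.coeff_of_ord_lt (lt_of_le_of_lt (hsM i).2 hj), mul_zero]
    have hDQcoeff : ∀ j, O.coeff (O.D * Q) j = O.coeff P j - O.coeff P2 j := by
      intro j
      rw [hPQ, O.coeff_add]; ring
    have hQvan : ∀ j, l + n < j → O.coeff Q j = 0 := by
      by_contra hcon
      push_neg at hcon
      obtain ⟨j, hj, hjne⟩ := hcon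
      have hQ0 : Q ≠ 0 := fun h => hjne (by rw [h, O.coeff_zero])
      have hMj : l + n < O.ord Q := lt_of_lt_of_le hj (O.le_ord hjne)
      have htop : O.coeff (O.D * Q) (O.ord Q + 1) = φ (O.σ (O.pcf Q (O.ord Q))) :=
        O.coeff_D_mul_top hQB (fun i hi => O.coeff_of_ord_lt hi)
      have hne : O.coeff (O.D * Q) (O.ord Q + 1) ≠ 0 := by
        rw [htop]
        intro hzz
        have h1 : O.σ (O.pcf Q (O.ord Q)) = 0 := phi_inj (R := R) (by rw [hzz, map_zero])
        have h2 : O.pcf Q (O.ord Q) = 0 := by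
          have := congrArg O.σ.symm h1
          rwa [O.σ.symm_apply_apply, map_zero] at this
        exact (O.coeff_ord_ne hQ0) (by rw [O.pcf_spec (hQB (O.ord Q)), h2, map_zero])
      refine hne ?_
      rw [hDQcoeff, hord _ (by omega), hP2van _ (by omega), sub_zero]
    have hform : O.coeff P (l + n + 1) = φ (O.σ (O.pcf Q (l + n))) := by
      have h1 : O.coeff (O.D * Q) (l + n + 1) = φ (O.σ (O.pcf Q (l + n))) :=
        O.coeff_D_mul_top hQB hQvan
      have h2 := hDQcoeff (l + n + 1)
      rw [h1, hP2van _ (by omega), sub_zero] at h2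
      rw [← h2]
    have ht' : t = O.σ (O.pcf Q (l + n)) := by
      apply phi_inj (R := R)
      rw [← ht]
      rw [show l + (n + 1) = l + n + 1 from rfl] at ht ⊢
      exact hform
    rw [Function.iterate_succ_apply, ht', O.σ.symm_apply_apply]
    exact ih Q hQcont hQvan _ (O.pcf_spec (hQB (l + n)))

end OreAlg

section PolySigma

variable {R : Type} [CommRing R] [IsDomain R]

lemma iter_map_zero (e : Polynomial R ≃+* Polynomial R) (k : ℕ) : (⇑e)^[k] 0 = 0 := by
  induction k with
  | zero => rfl
  | succ k ih => rw [Function.iterate_succ_apply', ih, map_zero]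

lemma iter_map_mul (e : Polynomial R ≃+* Polynomial R) (k : ℕ) (x y : Polynomial R) :
    (⇑e)^[k] (x * y) = (⇑e)^[k] x * (⇑e)^[k] y := by
  induction k with
  | zero => rfl
  | succ k ih => rw [Function.iterate_succ_apply', Function.iterate_succ_apply',
      Function.iterate_succ_apply', ih, map_mul]

lemma iter_map_C (e : Polynomial R ≃+* Polynomial R) (he : ∀ r : R, e (Polynomial.C r) = Polynomial.C r)
    (k : ℕ) (r : R) : (⇑e)^[k] (Polynomial.C r) = Polynomial.C r := by
  induction k with
  | zero => rfl
  | succ k ih => rw [Function.iterate_succ_apply', ih, he]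

lemma iter_dvd (e : Polynomial R ≃+* Polynomial R) (k : ℕ) {x y : Polynomial R} (h : x ∣ y) :
    (⇑e)^[k] x ∣ (⇑e)^[k] y := by
  obtain ⟨z, hz⟩ := h
  exact ⟨(⇑e)^[k] z, by rw [hz, iter_map_mul]⟩

lemma iter_ne_zero (e : Polynomial R ≃+* Polynomial R) (k : ℕ) {x : Polynomial R} (h : x ≠ 0) :
    (⇑e)^[k] x ≠ 0 := by
  induction k with
  | zero => exact h
  | succ k ih =>
    rw [Function.iterate_succ_apply']
    intro hz
    exact ih (by simpa using e.injective (by rw [hz, map_zero]))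

lemma symm_cancel (e : Polynomial R ≃+* Polynomial R) (k : ℕ) (x : Polynomial R) :
    (⇑e.symm)^[k] ((⇑e)^[k] x) = x :=
  (Function.LeftInverse.iterate e.symm_apply_apply k) x

lemma cancel_symm (e : Polynomial R ≃+* Polynomial R) (k : ℕ) (x : Polynomial R) :
    (⇑e)^[k] ((⇑e.symm)^[k] x) = x :=
  (Function.LeftInverse.iterate e.apply_symm_apply k) x

lemma equiv_fix_comp (e : Polynomial R ≃+* Polynomial R)
    (he : ∀ r : R, e (Polynomial.C r) = Polynomial.C r) (p : Polynomial R) :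
    e p = p.comp (e Polynomial.X) := by
  have hhom : (e : Polynomial R →+* Polynomial R)
      = Polynomial.eval₂RingHom Polynomial.C (e Polynomial.X) := by
    apply Polynomial.ringHom_ext
    · intro a
      rw [RingHom.coe_coe, he a]
      simp
    · simp
  have := DFunLike.congr_fun hhom p
  rw [RingHom.coe_coe] at this
  rw [this]
  rfl

lemma equiv_fix_natDegree (e : Polynomial R ≃+* Polynomial R)
    (he : ∀ r : R, e (Polynomial.C r) = Polynomial.C r) (p : Polynomial R) :
    (e p).natDegree = p.natDegree := by
  have hesymm : ∀ r : R, e.symm (Polynomial.C r) = Polynomial.C r := by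
    intro r
    have := congrArg e.symm (he r)
    rw [e.symm_apply_apply] at this
    exact this.symm
  have hX : (Polynomial.X : Polynomial R)
      = (e Polynomial.X).comp (e.symm Polynomial.X) := by
    conv_lhs => rw [← e.symm_apply_apply Polynomial.X]
    rw [equiv_fix_comp e.symm hesymm (e Polynomial.X)]
  have hdeg : (1 : ℕ) = (e Polynomial.X).natDegree * (e.symm Polynomial.X).natDegree := by
    have := congrArg Polynomial.natDegree hX
    rwa [Polynomial.natDegree_X, Polynomial.natDegree_comp] at this
  have h1 : (e Polynomial.X).natDegree = 1 := Nat.eq_one_of_mul_eq_one_right hdeg.symm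
  rw [equiv_fix_comp e he p, Polynomial.natDegree_comp, h1, mul_one]

lemma iter_natDegree (e : Polynomial R ≃+* Polynomial R)
    (he : ∀ r : R, e (Polynomial.C r) = Polynomial.C r) (k : ℕ) (p : Polynomial R) :
    ((⇑e)^[k] p).natDegree = p.natDegree := by
  induction k with
  | zero => rfl
  | succ k ih => rw [Function.iterate_succ_apply', equiv_fix_natDegree e he, ih]

end PolySigma

section PrimeFacts

variable {R : Type} [CommRing R] [IsDomain R] {m : ℕ}

lemma notdvd_pow_mul_prod (p : Fin m → Polynomial R) (e : Fin m → ℕ) (i : Fin m)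
    (hprime : ∀ j, Prime (p j)) (hdeg : ∀ j, 0 < (p j).natDegree)
    (hcop : ∀ j k, j ≠ k → Copr (p j) (p k))
    (y : Polynomial R) (hy : ¬ p i ∣ y) :
    ¬ p i ^ (e i + 1) ∣ y * ∏ j, p j ^ e j := by
  intro hdvd
  classical
  have hsplit : ∏ j, p j ^ e j
      = p i ^ e i * ∏ j ∈ Finset.univ.erase i, p j ^ e j :=
    (Finset.mul_prod_erase Finset.univ _ (Finset.mem_univ i)).symm
  set Z := ∏ j ∈ Finset.univ.erase i, p j ^ e j with hZ
  have hz : ¬ p i ∣ Z := by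
    intro h
    obtain ⟨j, hj, hdv⟩ := ((hprime i).dvd_finset_prod_iff _).mp h
    have hji : j ≠ i := (Finset.mem_erase.mp hj).1
    have : p i ∣ p j := (hprime i).dvd_of_dvd_pow hdv
    exact (hprime i).not_unit (hcop i j (Ne.symm hji) (p i) dvd_rfl this)
  obtain ⟨q, hq⟩ := hdvd
  have hq2 : p i ^ e i * (y * Z) = p i ^ e i * (p i * q) := by
    calc p i ^ e i * (y * Z) = y * (p i ^ e i * Z) := by ring
      _ = y * ∏ j, p j ^ e j := by rw [← hsplit]
      _ = p i ^ (e i + 1) * q := hq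
      _ = p i ^ e i * (p i * q) := by rw [pow_succ]; ring
  have hyz : y * Z = p i * q :=
    mul_left_cancel₀ (pow_ne_zero _ (hprime i).ne_zero) hq2
  rcases (hprime i).2.2 y Z ⟨q, hyz⟩ with h | h
  · exact hy h
  · exact hz h

lemma prod_pow_dvd (p : Fin m → Polynomial R) (mm : Fin m → ℕ)
    (hprime : ∀ j, Prime (p j)) (hcop : ∀ j k, j ≠ k → Copr (p j) (p k)) :
    ∀ (s : Finset (Fin m)) (y : Polynomial R), (∀ i ∈ s, p i ^ mm i ∣ y) →
      (∏ i ∈ s, p i ^ mm i) ∣ y := by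
  classical
  intro s
  induction s using Finset.induction_on with
  | empty => intro y _; simpa using one_dvd y
  | @insert a s ha ih =>
    intro y hy
    obtain ⟨z, hz⟩ := hy a (Finset.mem_insert_self a s)
    have hfor : ∀ i ∈ s, p i ^ mm i ∣ z := by
      intro i hi
      have h1 : p i ^ mm i ∣ p a ^ mm a * z := hz ▸ hy i (Finset.mem_insert_of_mem hi)
      have hne : i ≠ a := ne_of_mem_of_not_mem hi ha
      have hna : ¬ p i ∣ p a ^ mm a := fun h =>
        (hprime i).not_unit (hcop i a hne (p i) dvd_rfl ((hprime i).dvd_of_dvd_pow h))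
      exact (hprime i).pow_dvd_of_dvd_mul_left _ hna h1
    rw [Finset.prod_insert ha, hz]
    exact mul_dvd_mul_left _ (ih z hfor)

lemma strip_pow {P h : Polynomial R} (hp : Prime P) (hnot : ¬ P ∣ h) :
    ∀ (n : ℕ) (y : Polynomial R), h ∣ y * P ^ n → h ∣ y := by
  intro n
  induction n with
  | zero => intro y hy; simpa using hy
  | succ n ih =>
    intro y hy
    have h1 : h ∣ (y * P) * P ^ n := by
      rw [mul_assoc, ← pow_succ']
      rwa [pow_succ] at hy
      
    have h2 : h ∣ y * P := ih (y * P) h1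
    obtain ⟨q, hq⟩ := h2
    have hPd : P ∣ h * q := ⟨y, by rw [← hq]; ring⟩
    rcases hp.2.2 h q hPd with hc | hc
    · exact absurd hc hnot
    · obtain ⟨q', hq'⟩ := hc
      refine ⟨q', ?_⟩
      have : y * P = h * q' * P := by rw [hq, hq']; ring
      exact mul_right_cancel₀ hp.ne_zero this

lemma strip_prod (p : Fin m → Polynomial R) (n : Fin m → ℕ)
    (hprime : ∀ j, Prime (p j)) {h : Polynomial R} (hnd : ∀ i, ¬ p i ∣ h) :
    ∀ (s : Finset (Fin m)) (y : Polynomial R), h ∣ y * ∏ i ∈ s, p i ^ n i → h ∣ y := by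
  classical
  intro s
  induction s using Finset.induction_on with
  | empty => intro y hy; simpa using hy
  | @insert a s ha ih =>
    intro y hy
    rw [Finset.prod_insert ha] at hy
    have : h ∣ (y * ∏ i ∈ s, p i ^ n i) * p a ^ n a := by
      have hr : y * (p a ^ n a * ∏ i ∈ s, p i ^ n i)
          = (y * ∏ i ∈ s, p i ^ n i) * p a ^ n a := by ring
      rwa [hr] at hy
    exact ih _ (strip_pow (hprime a) (hnd a) _ _ this)

end PrimeFacts

namespace OreAlg

variable {R : Type} [CommRing R] [IsDomain R] {A : Type} [Ring A] (O : OreAlg R A)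

local notation "φ" => algebraMap (Polynomial R) (QX R)

lemma transport {L : A} {l r : ℕ} (hcont : O.cont L = O.LIdeal (O.M L l)) (hlr : r ≤ l)
    {X : A} (hX : X ∈ O.cont L) {j : ℕ} (hrj : r ≤ j)
    (hvan : ∀ i, j < i → O.coeff X i = 0) {t₁ : Polynomial R} (ht₁ : O.coeff X j = φ t₁) :
    ∃ s₀ ∈ O.Icoeff L l, (⇑O.σ.symm)^[l - r] s₀ = (⇑O.σ.symm)^[j - r] t₁ := by
  rcases le_or_gt j l with hjl | hlj
  · -- lift by multiplying with D^(l-j)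
    have hXB : O.InB X := hX.1
    have hfacts := O.Dpow_facts (l - j) hXB hvan
    have hidx : j + (l - j) = l := by omega
    refine ⟨(⇑O.σ)^[l - j] t₁, ⟨O.D ^ (l - j) * X, ⟨O.cont_Dpow _ hX, ?_⟩, ?_⟩, ?_⟩
    · exact O.ord_le (fun i hi => hfacts.1 i (by omega))
    · have := hfacts.2
      rw [hidx, O.pcf_eq ht₁] at this
      exact this
    · have harith : l - r = (j - r) + (l - j) := by omega
      rw [harith, Function.iterate_add_apply]
      have hcancel : (⇑O.σ.symm)^[l - j] ((⇑O.σ)^[l - j] t₁) = t₁ := symm_cancel O.σ _ _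
      rw [hcancel]
  · -- descend using the generation hypothesis
    have harith : l + (j - l) = j := by omega
    have hdesc := O.desc hcont (j - l) X hX (fun i hi => hvan i (by omega)) t₁
      (by rw [harith]; exact ht₁)
    refine ⟨(⇑O.σ.symm)^[j - l] t₁, hdesc, ?_⟩
    rw [← Function.iterate_add_apply]
    congr 1
    omega

end OreAlg

namespace OreAlg

variable {R : Type} [CommRing R] [IsDomain R] {A : Type} [Ring A] (O : OreAlg R A)

local notation "φ" => algebraMap (Polynomial R) (QX R)

lemma pseudo_div {L : A} {l : ℕ} (f : Polynomial R) (hfI : f ∈ O.Icoeff L l) (hf0 : f ≠ 0)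
    (hfmin : ∀ s ∈ O.Icoeff L l, s ≠ 0 → f.natDegree ≤ s.natDegree) :
    ∀ s ∈ O.Icoeff L l, ∃ d : R, d ≠ 0 ∧ f ∣ C d * s := by
  suffices H : ∀ (n : ℕ), ∀ s ∈ O.Icoeff L l, s.natDegree ≤ n →
      ∃ d : R, d ≠ 0 ∧ f ∣ C d * s by
    intro s hs; exact H s.natDegree s hs le_rfl
  intro n
  induction n using Nat.strong_induction_on with
  | _ n ih =>
    intro s hs hdeg
    by_cases hs0 : s = 0
    · exact ⟨1, one_ne_zero, by rw [hs0, mul_zero]; exact dvd_zero f⟩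
    have hfd : f.natDegree ≤ s.natDegree := hfmin s hs hs0
    set dd := s.natDegree - f.natDegree with hdd
    set s' := C f.leadingCoeff * s - C s.leadingCoeff * (f * X ^ dd) with hs'
    have hs'I : s' ∈ O.Icoeff L l := by
      have h1 := O.I_polymul (C f.leadingCoeff) hs
      have h2 := O.I_polymul (-(C s.leadingCoeff * X ^ dd)) hfI
      have heq : s' = C f.leadingCoeff * s + (-(C s.leadingCoeff * X ^ dd)) * f := by
        rw [hs']; ring
      rw [heq]; exact O.I_add h1 h2
    have hcoeff : s'.coeff s.natDegree = 0 := by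
      rw [hs', Polynomial.coeff_sub, Polynomial.coeff_C_mul, Polynomial.coeff_C_mul]
      have hmulX : (f * X ^ dd).coeff s.natDegree = f.leadingCoeff := by
        have hidx : s.natDegree = f.natDegree + dd := by omega
        rw [hidx, Polynomial.coeff_mul_X_pow, Polynomial.coeff_natDegree]
      rw [hmulX, Polynomial.coeff_natDegree]
      ring
    have hdegle : s'.natDegree ≤ s.natDegree := by
      refine le_trans (Polynomial.natDegree_sub_le _ _) (max_le (Polynomial.natDegree_C_mul_le _ _) ?_)
      refine le_trans (Polynomial.natDegree_C_mul_le _ _) ?_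
      refine le_trans (Polynomial.natDegree_mul_le) ?_
      rw [Polynomial.natDegree_X_pow]
      omega
    by_cases hs'0 : s' = 0
    · refine ⟨f.leadingCoeff, Polynomial.leadingCoeff_ne_zero.mpr hf0, ?_⟩
      have h0 : C f.leadingCoeff * s - C s.leadingCoeff * (f * X ^ dd) = 0 := by
        rw [← hs']; exact hs'0
      have heq2 := sub_eq_zero.mp h0
      exact ⟨C s.leadingCoeff * X ^ dd, by rw [heq2]; ring⟩
    · have hlt : s'.natDegree < s.natDegree := by
        rcases lt_or_eq_of_le hdegle with h | h
        · exact h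
        · exfalso
          have hl0 : s'.leadingCoeff = 0 := by
            rw [Polynomial.leadingCoeff, h, hcoeff]
          exact hs'0 (Polynomial.leadingCoeff_eq_zero.mp hl0)
      obtain ⟨d2, hd2, hdvd2⟩ := ih s'.natDegree (by omega) s' hs'I le_rfl
      refine ⟨d2 * f.leadingCoeff,
        mul_ne_zero hd2 (Polynomial.leadingCoeff_ne_zero.mpr hf0), ?_⟩
      have hexp : C (d2 * f.leadingCoeff) * s
          = C d2 * s' + (C d2 * C s.leadingCoeff * X ^ dd) * f := by
        rw [hs', Polynomial.C_mul]; ring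
      rw [hexp]
      exact dvd_add hdvd2 (dvd_mul_left f _)

end OreAlg

/-- suppose `cont(L) = R[x][∂]·M_ℓ`.  Let `f` be the (unique)
minimal-degree element of a reduced Gröbner basis of `I_ℓ` — encoded by: `f ∈ I_ℓ`
is nonzero of minimal degree, and every element of `I_ℓ` of the same degree is an
`R`-multiple of `f` (reduces to zero by `f`).  Then any `F ∈ cont(L)` of order `ℓ`
with `lc_∂(F) = f` is a completely desingularized operator for `L`: `F` is
desingularized and its constant `c_F` (content of `f`, via `σ^{-(ℓ-r)}(f) = c_F·g`)
divides the constant of every desingularized operator for `L`. -/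
theorem completely_desingularized {R : Type} [CommRing R] [IsDomain R]
    [IsPrincipalIdealRing R] {A : Type} [Ring A] (O : OreAlg R A)
    (L : A) (hL : L ≠ 0) (hLB : O.InB L)
    (r m : ℕ) (c : R) (p : Fin m → Polynomial R) (e : Fin m → ℕ)
    (hF : O.Factored L r m c p e)
    (l : ℕ) (hlr : r ≤ l) (hcont : O.cont L = O.LIdeal (O.M L l))
    (g : Polynomial R) (hg : g.IsPrimitive)
    (hgall : ∀ (T : A) (t : Polynomial R), O.Desing L r m c p e T →
      O.lc T = algebraMap (Polynomial R) (QX R) t →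
      ∃ cT : R, (⇑O.σ.symm)^[O.ord T - r] t = C cT * g)
    (f : Polynomial R) (hfI : f ∈ O.Icoeff L l) (hf0 : f ≠ 0)
    (hfmin : ∀ s ∈ O.Icoeff L l, s ≠ 0 → f.natDegree ≤ s.natDegree)
    (hfred : ∀ s ∈ O.Icoeff L l, s.natDegree = f.natDegree → ∃ u : R, s = C u * f)
    (F : A) (hFc : F ∈ O.cont L) (hFord : O.ord F = l)
    (hFlc : O.lc F = algebraMap (Polynomial R) (QX R) f) :
    O.Desing L r m c p e F ∧
    ∃ cF : R, (⇑O.σ.symm)^[l - r] f = C cF * g ∧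
      ∀ (T : A) (t : Polynomial R) (cT : R), O.Desing L r m c p e T →
        O.lc T = algebraMap (Polynomial R) (QX R) t →
        (⇑O.σ.symm)^[O.ord T - r] t = C cT * g → cF ∣ cT := by
  classical
  obtain ⟨hordL, hrpos, hcne, hlcL, hirr, hcop⟩ := hF
  set φR := algebraMap (Polynomial R) (QX R) with hφR
  set l' : Polynomial R := C c * ∏ i, p i ^ e i with hl'
  have hprime : ∀ j, Prime (p j) := fun j => (hirr j).1.prime
  have hdeg : ∀ j, 0 < (p j).natDegree := fun j => (hirr j).2
  have hpne : ∀ j, (p j : Polynomial R) ≠ 0 := fun j => (hprime j).ne_zero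
  have hl'0 : l' ≠ 0 := mul_ne_zero (Polynomial.C_ne_zero.mpr hcne)
    (Finset.prod_ne_zero_iff.mpr (fun i _ => pow_ne_zero _ (hpne i)))
  have hσsC : ∀ r0 : R, O.σ.symm (C r0) = C r0 := fun r0 => by
    have h := congrArg O.σ.symm (O.σ_fix r0)
    rw [O.σ.symm_apply_apply] at h
    exact h.symm
  have hphi0 : ∀ x : Polynomial R, φR x = 0 → x = 0 := fun x hx =>
    OreAlg.phi_inj (R := R) (by rw [hx, map_zero])
  -- facts about L
  have hLvan : ∀ i, r < i → O.coeff L i = 0 := fun i hi =>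
    O.coeff_of_ord_lt (by rw [hordL]; exact hi)
  have hcoeffLr : O.coeff L r = φR l' := by
    have h : O.lc L = O.coeff L r := by rw [OreAlg.lc, hordL]
    rw [← h, hlcL]
  have hpcfLr : O.pcf L r = l' := O.pcf_eq hcoeffLr
  have hLcont : L ∈ O.cont L := ⟨hLB, 1, (one_mul L).symm⟩
  have hL''mem : (⇑O.σ)^[l - r] l' ∈ O.Icoeff L l := by
    have hfacts := O.Dpow_facts (l - r) hLB hLvan
    have hidx : r + (l - r) = l := by omega
    refine ⟨O.D ^ (l - r) * L,
      ⟨O.cont_Dpow _ hLcont, O.ord_le (fun i hi => hfacts.1 i (by omega))⟩, ?_⟩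
    have h := hfacts.2
    rw [hidx, hpcfLr] at h
    exact h
  have key : ∀ s ∈ O.Icoeff L l, ∃ d : R, d ≠ 0 ∧ f ∣ C d * s :=
    O.pseudo_div f hfI hf0 hfmin
  set f' : Polynomial R := (⇑O.σ.symm)^[l - r] f with hf'def
  have hf'0 : f' ≠ 0 := iter_ne_zero _ _ hf0
  obtain ⟨d0, hd00, hfdvdL⟩ := key _ hL''mem
  have hdivL : f' ∣ C (d0 * c) * ∏ i, p i ^ e i := by
    have h1 := iter_dvd O.σ.symm (l - r) hfdvdL
    rw [iter_map_mul, iter_map_C O.σ.symm hσsC, symm_cancel] at h1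
    calc f' ∣ C d0 * l' := h1
      _ = C (d0 * c) * ∏ i, p i ^ e i := by rw [hl', Polynomial.C_mul]; ring
  -- multiplicities of p i in f'
  set mm : Fin m → ℕ := fun i => Nat.findGreatest (fun n => p i ^ n ∣ f') f'.natDegree
    with hmm
  have hm_dvd : ∀ i, p i ^ mm i ∣ f' := by
    intro i
    have h : (fun n => p i ^ n ∣ f') (Nat.findGreatest (fun n => p i ^ n ∣ f') f'.natDegree) :=
      Nat.findGreatest_spec (P := fun n => p i ^ n ∣ f') (m := 0) (Nat.zero_le _)
        (show p i ^ 0 ∣ f' by simpa using one_dvd f')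
    simpa [hmm] using h
  have hm_not : ∀ i, ¬ p i ^ (mm i + 1) ∣ f' := by
    intro i hdvd
    have h1 := Polynomial.natDegree_le_of_dvd hdvd hf'0
    rw [Polynomial.natDegree_pow] at h1
    have hb : mm i + 1 ≤ f'.natDegree :=
      le_trans (Nat.le_mul_of_pos_right _ (hdeg i)) h1
    have hgr := Nat.findGreatest_is_greatest (P := fun n => p i ^ n ∣ f')
      (n := f'.natDegree) (k := mm i + 1) (by rw [hmm]; exact Nat.lt_succ_self _) hb
    rw [hmm] at hgr
    exact hgr hdvd
  have hnotpowC : ∀ (i : Fin m) (u : R), u ≠ 0 → ¬ p i ∣ C u := by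
    intro i u hu hdvd
    have h := Polynomial.natDegree_le_of_dvd hdvd (Polynomial.C_ne_zero.mpr hu)
    rw [Polynomial.natDegree_C] at h
    have := hdeg i
    omega
  have hm_le : ∀ i, mm i ≤ e i := by
    intro i
    by_contra hgt
    have h1 : p i ^ (e i + 1) ∣ f' := dvd_trans (pow_dvd_pow _ (by omega)) (hm_dvd i)
    exact notdvd_pow_mul_prod p e i hprime hdeg hcop _
      (hnotpowC i _ (mul_ne_zero hd00 hcne)) (h1.trans hdivL)
  set W : Polynomial R := ∏ i, p i ^ mm i with hW
  obtain ⟨h₀, hWH⟩ : W ∣ f' :=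
    prod_pow_dvd p mm hprime hcop Finset.univ f' (fun i _ => hm_dvd i)
  have hpnh : ∀ i, ¬ p i ∣ h₀ := by
    intro i hpi
    apply hm_not i
    obtain ⟨t0, ht0⟩ := hpi
    have hWsplit : W = p i ^ mm i * ∏ j ∈ Finset.univ.erase i, p j ^ mm j :=
      (Finset.mul_prod_erase _ _ (Finset.mem_univ i)).symm
    refine ⟨(∏ j ∈ Finset.univ.erase i, p j ^ mm j) * t0, ?_⟩
    rw [hWH, hWsplit, ht0, pow_succ]; ring
  have hVsplit : (∏ i, p i ^ e i) = W * ∏ i, p i ^ (e i - mm i) := by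
    rw [hW, ← Finset.prod_mul_distrib]
    exact Finset.prod_congr rfl (fun i _ => by
      rw [← pow_add, Nat.add_sub_cancel' (hm_le i)])
  have hW0 : W ≠ 0 := Finset.prod_ne_zero_iff.mpr (fun i _ => pow_ne_zero _ (hpne i))
  have hhdvd : h₀ ∣ C (d0 * c) * ∏ i, p i ^ (e i - mm i) := by
    have h2 : W * h₀ ∣ W * (C (d0 * c) * ∏ i, p i ^ (e i - mm i)) := by
      rw [← hWH]
      calc f' ∣ C (d0 * c) * ∏ i, p i ^ e i := hdivL
        _ = W * (C (d0 * c) * ∏ i, p i ^ (e i - mm i)) := by rw [hVsplit]; ring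
    exact (mul_dvd_mul_iff_left hW0).mp h2
  have hstrip : h₀ ∣ C (d0 * c) :=
    strip_prod p (fun i => e i - mm i) hprime hpnh Finset.univ _ hhdvd
  obtain ⟨u, hu⟩ : ∃ u₁ : R, h₀ = C u₁ := by
    have hdc : (C (d0 * c) : Polynomial R) ≠ 0 :=
      Polynomial.C_ne_zero.mpr (mul_ne_zero hd00 hcne)
    have h := Polynomial.natDegree_le_of_dvd hstrip hdc
    rw [Polynomial.natDegree_C] at h
    exact ⟨h₀.coeff 0, Polynomial.eq_C_of_natDegree_le_zero h⟩
  have hu0 : u ≠ 0 := by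
    intro h
    apply hf'0
    rw [hWH, hu, h, map_zero, mul_zero]
  have hf'shape : f' = C u * W := by rw [hWH, hu]; ring
  -- non-removability
  have hnonrem : ∀ (i : Fin m) (d : ℕ), e i - mm i < d → ¬ O.Removable L (p i ^ d) := by
    intro i d hd hrem
    obtain ⟨k, P, hordP, hPLB, w, v, t₁, l₀, hv0, hcopr, hlcPL, hlcL0, heq⟩ := hrem
    have hl₀ : l₀ = l' := OreAlg.phi_inj (R := R) (by rw [← hlcL0, hlcL])
    have hd1 : d ≠ 0 := by omega
    have hP0 : P ≠ 0 := by
      intro hP0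
      rw [hP0, zero_mul] at hlcPL
      have h00 : O.lc (0 : A) = 0 := O.coeff_zero _
      have ht₁ : t₁ = 0 := hphi0 t₁ (by rw [← hlcPL, h00])
      rw [ht₁, iter_map_zero, zero_mul] at heq
      have hw0 : w = 0 := by
        rcases mul_eq_zero.mp heq.symm with h | h
        · exact h
        · exact absurd (hl₀ ▸ h) hl'0
      have := hcopr (p i) (dvd_pow_self (p i) hd1) (by rw [hw0]; exact dvd_zero _)
      exact (hprime i).not_unit this
    have hmt := O.coeff_mul_top (P := P) (Y := L) hP0 hLB hLvan
    have hPLne : O.coeff (P * L) (O.ord P + r) ≠ 0 := by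
      rw [hmt.1]
      refine mul_ne_zero (O.coeff_ord_ne hP0) (fun hz => ?_)
      exact iter_ne_zero O.σ (O.ord P) (hpcfLr ▸ hl'0) (hphi0 _ hz)
    have hordPL : O.ord (P * L) = k + r := by
      rw [← hordP]
      exact le_antisymm (O.ord_le (fun n hn => hmt.2 n hn)) (O.le_ord hPLne)
    have hcoefft₁ : O.coeff (P * L) (k + r) = φR t₁ := by
      rw [← hordPL]
      exact hlcPL
    have hvanPL : ∀ n, k + r < n → O.coeff (P * L) n = 0 := by
      intro n hn
      refine hmt.2 n ?_
      rw [hordP]; exact hn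
    obtain ⟨s₀, hs₀I, hs₀rel⟩ := O.transport hcont hlr ⟨hPLB, P, rfl⟩
      (le_add_self : r ≤ k + r) hvanPL hcoefft₁
    rw [Nat.add_sub_cancel] at hs₀rel
    obtain ⟨d2, hd20, hfdvds⟩ := key s₀ hs₀I
    have hdvdt' : f' ∣ C d2 * (⇑O.σ.symm)^[k] t₁ := by
      have h1 := iter_dvd O.σ.symm (l - r) hfdvds
      rw [iter_map_mul, iter_map_C _ hσsC, hs₀rel] at h1
      exact h1
    set t' := (⇑O.σ.symm)^[k] t₁ with ht'
    have hpmdvd : p i ^ mm i ∣ t' :=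
      (hprime i).pow_dvd_of_dvd_mul_left _ (hnotpowC i d2 hd20) ((hm_dvd i).trans hdvdt')
    have hLHS : p i ^ (e i + 1) ∣ t' * (v * p i ^ d) := by
      have h1 : p i ^ mm i * p i ^ d ∣ t' * (v * p i ^ d) :=
        mul_dvd_mul hpmdvd (dvd_mul_left _ v)
      rw [← pow_add] at h1
      refine dvd_trans (pow_dvd_pow (p i) ?_) h1
      have := hm_le i
      omega
    rw [heq] at hLHS
    have hrw : w * l₀ = (w * C c) * ∏ j, p j ^ e j := by rw [hl₀, hl']; ring
    rw [hrw] at hLHS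
    have hpw : ¬ p i ∣ w * C c := by
      intro hdw
      rcases (hprime i).2.2 w (C c) hdw with h | h
      · exact (hprime i).not_unit (hcopr (p i) (dvd_pow_self _ hd1) h)
      · exact hnotpowC i c hcne h
    exact notdvd_pow_mul_prod p e i hprime hdeg hcop _ hpw hLHS
  -- F is desingularized
  have hDesF : O.Desing L r m c p e F := by
    refine ⟨hFc, by rw [hFord]; exact hlr,
      u, c, fun i => e i - mm i, f, l', hcne, fun i => Nat.sub_le _ _, hFlc, hlcL, ?_, hnonrem⟩
    rw [hFord, ← hf'def, hf'shape, hl', hVsplit]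
    ring
  -- the constant of F
  obtain ⟨cF, hcF⟩ := hgall F f hDesF hFlc
  rw [hFord] at hcF
  have hg0 : g ≠ 0 := by
    intro h
    rw [h] at hg
    have : IsUnit (0 : R) := hg (0 : R) (by rw [map_zero])
    exact not_isUnit_zero this
  have hcF0 : cF ≠ 0 := by
    intro h
    apply hf'0
    rw [hf'def, hcF, h, map_zero, zero_mul]
  refine ⟨hDesF, cF, hcF, ?_⟩
  intro T t cT hT hlcT htg
  by_cases hcT0 : cT = 0
  · exact ⟨0, by rw [hcT0, mul_zero]⟩
  obtain ⟨hTc, hrT, -⟩ := hT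
  have hT0 : T ≠ 0 := by
    intro h
    rw [h, O.ord_zero] at hrT
    omega
  have hcoeffT : O.coeff T (O.ord T) = φR t := hlcT
  obtain ⟨s₀, hs₀I, hs₀rel⟩ := O.transport hcont hlr hTc hrT
    (fun i hi => O.coeff_of_ord_lt hi) hcoeffT
  rw [htg] at hs₀rel
  have hs₀0 : s₀ ≠ 0 := by
    intro h
    rw [h, iter_map_zero] at hs₀rel
    exact (mul_ne_zero (Polynomial.C_ne_zero.mpr hcT0) hg0) hs₀rel.symm
  have hdegs₀ : s₀.natDegree = f.natDegree := by
    have h1 : (C cT * g).natDegree = s₀.natDegree := by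
      rw [← hs₀rel]
      exact iter_natDegree O.σ.symm hσsC _ s₀
    have h2 : (C cF * g).natDegree = f.natDegree := by
      rw [← hcF]
      exact iter_natDegree O.σ.symm hσsC _ f
    rw [← h1, ← h2, Polynomial.natDegree_mul (Polynomial.C_ne_zero.mpr hcT0) hg0,
      Polynomial.natDegree_mul (Polynomial.C_ne_zero.mpr hcF0) hg0,
      Polynomial.natDegree_C, Polynomial.natDegree_C]
  obtain ⟨u₂, hu₂⟩ := hfred s₀ hs₀I hdegs₀
  have happly := congrArg (fun z => (⇑O.σ.symm)^[l - r] z) hu₂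
  beta_reduce at happly
  rw [iter_map_mul, iter_map_C _ hσsC, hs₀rel, hcF] at happly
  have hC : C cT * g = C (u₂ * cF) * g := by
    rw [happly, Polynomial.C_mul]
    ring
  have hfin : cT = u₂ * cF := Polynomial.C_inj.mp (mul_right_cancel₀ hg0 hC)
  exact ⟨u₂, by rw [hfin]; ring⟩
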